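/- Let z₀ be a relative equilibrium with angular velocity ω and stability matrix B = K(M⁻¹D²H(z₀) + ω·Id). Suppose v = v₁ + i v₂ (with v₁, v₂ ∈ ℝ^{2n}, not both zero) is a complex eigenvector of M⁻¹D²H(z₀) with eigenvalue μ = α + iβ. Then Bv₁ = (α + ω)Kv₁ − βKv₂, Bv₂ = βKv₁ + (α + ω)Kv₂, B(Kv₁) = (α − ω)v₁ − βv₂, and B(Kv₂) = βv₁ + (α − ω)v₂; consequently span{v₁, v₂, Kv₁, Kv₂} is a real invariant subspace of B, and if this subspace is four-dimensional then the real quartic (λ² + ω² − μ²)(λ² + ω² − μ̄²) divides the characteristic polynomial of B. -/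

import Mathlib

noncomputable section

open Finset Polynomial

abbrev Idx (n : ℕ) := Fin n × Fin 2

/-- The Hamiltonian of the planar `n`-vortex problem. -/
def vortexH (n : ℕ) (Γ : Fin n → ℝ) (z : Idx n → ℝ) : ℝ :=
  -∑ i : Fin n, ∑ j ∈ Finset.Ioi i, Γ i * Γ j *
    Real.log (Real.sqrt ((z (i, 0) - z (j, 0)) ^ 2 + (z (i, 1) - z (j, 1)) ^ 2))

/-- The total vortex angular momentum `L = ∑_{i<j} Γᵢ Γⱼ`. -/
def vortexL (n : ℕ) (Γ : Fin n → ℝ) : ℝ :=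
  ∑ i : Fin n, ∑ j ∈ Finset.Ioi i, Γ i * Γ j

/-- The gradient of the Hamiltonian (vector of partial derivatives). -/
def gradH (n : ℕ) (Γ : Fin n → ℝ) (z : Idx n → ℝ) : Idx n → ℝ := fun a =>
  fderiv ℝ (vortexH n Γ) z (Pi.single a 1)

/-- The Hessian matrix `D²H(z)` of second partial derivatives. -/
def D2H (n : ℕ) (Γ : Fin n → ℝ) (z : Idx n → ℝ) : Matrix (Idx n) (Idx n) ℝ :=
  Matrix.of fun a b =>
    fderiv ℝ (fun w => fderiv ℝ (vortexH n Γ) w (Pi.single b 1)) z (Pi.single a 1)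

/-- The block-diagonal rotation matrix `K` with `n` copies of `J = [[0,1],[-1,0]]`. -/
def Kmat (n : ℕ) : Matrix (Idx n) (Idx n) ℝ :=
  Matrix.of fun a b => if a.1 = b.1 then !![0, 1; -1, 0] a.2 b.2 else 0

/-- The diagonal matrix `M = diag(Γ₁,Γ₁,…,Γₙ,Γₙ)` of circulations. -/
def Mmat (n : ℕ) (Γ : Fin n → ℝ) : Matrix (Idx n) (Idx n) ℝ :=
  Matrix.diagonal fun a => Γ a.1

/-- The vortex positions are pairwise distinct. -/
def Distinct (n : ℕ) (z : Idx n → ℝ) : Prop :=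
  ∀ i j : Fin n, i ≠ j → (z (i, 0), z (i, 1)) ≠ (z (j, 0), z (j, 1))

/-- The angular impulse `I(z) = (1/2) ∑ᵢ Γᵢ ‖zᵢ‖²`. -/
def angImpulse (n : ℕ) (Γ : Fin n → ℝ) (z : Idx n → ℝ) : ℝ :=
  (1 / 2) * ∑ i : Fin n, Γ i * ((z (i, 0)) ^ 2 + (z (i, 1)) ^ 2)

/-- `z₀` is a relative equilibrium with angular velocity `ω ≠ 0`:
`∇H(z₀) + ω M z₀ = 0`. -/
def IsRelEq (n : ℕ) (Γ : Fin n → ℝ) (z₀ : Idx n → ℝ) (ω : ℝ) : Prop :=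
  Distinct n z₀ ∧ ω ≠ 0 ∧ gradH n Γ z₀ + ω • (Mmat n Γ).mulVec z₀ = 0

/-- The stability matrix `B = K (M⁻¹ D²H(z₀) + ω Id)`. -/
def Bmat (n : ℕ) (Γ : Fin n → ℝ) (z₀ : Idx n → ℝ) (ω : ℝ) : Matrix (Idx n) (Idx n) ℝ :=
  Kmat n * ((Mmat n Γ)⁻¹ * D2H n Γ z₀ + ω • (1 : Matrix (Idx n) (Idx n) ℝ))

/-- The multiset of (complex) eigenvalues of the stability matrix `B`, with multiplicity. -/
def specB (n : ℕ) (Γ : Fin n → ℝ) (z₀ : Idx n → ℝ) (ω : ℝ) : Multiset ℂ :=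
  (((Bmat n Γ z₀ ω).map Complex.ofReal).charpoly).roots

/-- The trivial eigenvalues `0, 0, ωi, -ωi` of the stability matrix. -/
def trivialEvs (ω : ℝ) : Multiset ℂ := {0, 0, (ω : ℂ) * Complex.I, -((ω : ℂ) * Complex.I)}

/-- `V = span{z₀, Kz₀}`. -/
def Vspan (n : ℕ) (z₀ : Idx n → ℝ) : Submodule ℝ (Idx n → ℝ) :=
  Submodule.span ℝ {z₀, (Kmat n).mulVec z₀}

/-- The `M`-orthogonal complement `V^⊥` of `V = span{z₀, Kz₀}` (over ℝ). -/
def VperpR (n : ℕ) (Γ : Fin n → ℝ) (z₀ : Idx n → ℝ) : Submodule ℝ (Idx n → ℝ) :=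
  LinearMap.ker (Matrix.mulVecLin (Matrix.of
    ![(Mmat n Γ).mulVec z₀, (Mmat n Γ).mulVec ((Kmat n).mulVec z₀)]))

/-- The complexification of `V^⊥`. -/
def VperpC (n : ℕ) (Γ : Fin n → ℝ) (z₀ : Idx n → ℝ) : Submodule ℂ (Idx n → ℂ) :=
  LinearMap.ker (Matrix.mulVecLin (Matrix.of
    ![fun a => ((Mmat n Γ).mulVec z₀ a : ℂ),
      fun a => ((Mmat n Γ).mulVec ((Kmat n).mulVec z₀) a : ℂ)]))

/-- The complexified stability matrix as a linear map on `ℂ^{2n}`. -/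
def BC (n : ℕ) (Γ : Fin n → ℝ) (z₀ : Idx n → ℝ) (ω : ℝ) : (Idx n → ℂ) →ₗ[ℂ] (Idx n → ℂ) :=
  Matrix.mulVecLin ((Bmat n Γ z₀ ω).map Complex.ofReal)

/-- `z₀` is linearly stable: the `2n - 4` nontrivial eigenvalues of `B` are nonzero and purely
imaginary, and the restriction of `B` to `V^⊥` is diagonalizable over `ℂ`. -/
def IsLinearlyStable (n : ℕ) (Γ : Fin n → ℝ) (z₀ : Idx n → ℝ) (ω : ℝ) : Prop :=
  (∃ ν : Multiset ℂ, specB n Γ z₀ ω = trivialEvs ω + ν ∧ ∀ μ ∈ ν, μ ≠ 0 ∧ μ.re = 0) ∧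
  ∃ h : ∀ w ∈ VperpC n Γ z₀, BC n Γ z₀ ω w ∈ VperpC n Γ z₀,
    (⨆ μ : ℂ, Module.End.eigenspace ((BC n Γ z₀ ω).restrict h) μ) = ⊤

/-- `z₀` is spectrally stable: nontrivial eigenvalues are nonzero and purely imaginary. -/
def IsSpectrallyStable (n : ℕ) (Γ : Fin n → ℝ) (z₀ : Idx n → ℝ) (ω : ℝ) : Prop :=
  ∃ ν : Multiset ℂ, specB n Γ z₀ ω = trivialEvs ω + ν ∧ ∀ μ ∈ ν, μ ≠ 0 ∧ μ.re = 0

/-- `z₀` is degenerate: some nontrivial eigenvalue of `B` is zero. -/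
def IsDegenerate (n : ℕ) (Γ : Fin n → ℝ) (z₀ : Idx n → ℝ) (ω : ℝ) : Prop :=
  ∃ ν : Multiset ℂ, specB n Γ z₀ ω = trivialEvs ω + ν ∧ 0 ∈ ν

/-- `z₀` is unstable: some nontrivial eigenvalue of `B` has nonzero real part. -/
def IsUnstable (n : ℕ) (Γ : Fin n → ℝ) (z₀ : Idx n → ℝ) (ω : ℝ) : Prop :=
  ∃ ν : Multiset ℂ, specB n Γ z₀ ω = trivialEvs ω + ν ∧ ∃ μ ∈ ν, μ.re ≠ 0

/-- Rotation `e^{Jθ}` applied to each vortex of the configuration `z`. -/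
def rotConf (n : ℕ) (θ : ℝ) (z : Idx n → ℝ) : Idx n → ℝ := fun a =>
  if a.2 = 0 then Real.cos θ * z (a.1, 0) + Real.sin θ * z (a.1, 1)
  else -Real.sin θ * z (a.1, 0) + Real.cos θ * z (a.1, 1)

/-- The Euclidean norm on `ℝ^{2n}`. -/
def enorm2 (n : ℕ) (v : Idx n → ℝ) : ℝ := Real.sqrt (∑ a : Idx n, (v a) ^ 2)


namespace VtxAux

variable {n : ℕ}

def dd (i j : Fin n) (t : Fin 2) (z : Idx n → ℝ) : ℝ := z (i,t) - z (j,t)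
def uu (i j : Fin n) (z : Idx n → ℝ) : ℝ := dd i j 0 z ^ 2 + dd i j 1 z ^ 2
def ee (i j : Fin n) (t : Fin 2) (a : Idx n) : ℝ :=
  (if (i,t) = a then 1 else 0) - (if (j,t) = a then 1 else 0)

def pr (a : Idx n) : (Idx n → ℝ) →L[ℝ] ℝ := ContinuousLinearMap.proj a
def DD (i j : Fin n) (t : Fin 2) : (Idx n → ℝ) →L[ℝ] ℝ := pr (i,t) - pr (j,t)
def uD (i j : Fin n) (w : Idx n → ℝ) : (Idx n → ℝ) →L[ℝ] ℝ :=
  (2 * dd i j 0 w) • DD i j 0 + (2 * dd i j 1 w) • DD i j 1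

lemma hasFDerivAt_dd (i j : Fin n) (t : Fin 2) (w : Idx n → ℝ) :
    HasFDerivAt (dd i j t) (DD i j t) w :=
  ((pr (i,t)).hasFDerivAt.sub (pr (j,t)).hasFDerivAt)

lemma hasFDerivAt_uu (i j : Fin n) (w : Idx n → ℝ) :
    HasFDerivAt (uu i j) (uD i j w) w := by
  have h0 := ((hasFDerivAt_dd i j 0 w).mul (hasFDerivAt_dd i j 0 w))
  have h1 := ((hasFDerivAt_dd i j 1 w).mul (hasFDerivAt_dd i j 1 w))
  have := h0.add h1
  refine (this.congr_fderiv ?_).congr_of_eventuallyEq (Filter.Eventually.of_forall fun z => ?_)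
  · ext v; simp [uD]; ring
  · simp [uu]; ring

lemma continuous_uu (i j : Fin n) : Continuous (uu i j) := by
  unfold uu dd; fun_prop

lemma DD_apply (i j : Fin n) (t : Fin 2) (a : Idx n) :
    DD i j t (Pi.single a 1) = ee i j t a := by
  simp [DD, pr, ee, Pi.single_apply]

def HD (Γ : Fin n → ℝ) (w : Idx n → ℝ) : (Idx n → ℝ) →L[ℝ] ℝ :=
  -∑ i : Fin n, ∑ j ∈ Finset.Ioi i, (Γ i * Γ j / 2) • ((uu i j w)⁻¹ • uD i j w)

lemma vortexH_eq (Γ : Fin n → ℝ) :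
    vortexH n Γ = fun z => -∑ i : Fin n, ∑ j ∈ Finset.Ioi i,
      Γ i * Γ j / 2 * Real.log (uu i j z) := by
  funext z
  unfold vortexH
  congr 1
  refine Finset.sum_congr rfl fun i _ => Finset.sum_congr rfl fun j _ => ?_
  rw [Real.log_sqrt (by positivity)]
  unfold uu dd; ring

lemma hasFDerivAt_H (Γ : Fin n → ℝ) (w : Idx n → ℝ)
    (hw : ∀ i j : Fin n, i < j → uu i j w ≠ 0) :
    HasFDerivAt (vortexH n Γ) (HD Γ w) w := by
  rw [vortexH_eq]
  apply HasFDerivAt.neg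
  apply HasFDerivAt.fun_sum
  intro i _
  apply HasFDerivAt.fun_sum
  intro j hj
  exact ((hasFDerivAt_uu i j w).log (hw i j (Finset.mem_Ioi.mp hj))).const_mul _

def ll (i j : Fin n) (b : Idx n) (w : Idx n → ℝ) : ℝ :=
  2 * dd i j 0 w * ee i j 0 b + 2 * dd i j 1 w * ee i j 1 b

def G (Γ : Fin n → ℝ) (b : Idx n) (w : Idx n → ℝ) : ℝ :=
  -∑ i : Fin n, ∑ j ∈ Finset.Ioi i, Γ i * Γ j / 2 * ((uu i j w)⁻¹ * ll i j b w)

lemma fderivH_apply (Γ : Fin n → ℝ) (w : Idx n → ℝ)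
    (hw : ∀ i j : Fin n, i < j → uu i j w ≠ 0) (b : Idx n) :
    fderiv ℝ (vortexH n Γ) w (Pi.single b 1) = G Γ b w := by
  rw [(hasFDerivAt_H Γ w hw).fderiv]
  simp only [HD, G, ll, ContinuousLinearMap.neg_apply, ContinuousLinearMap.sum_apply,
    ContinuousLinearMap.smul_apply, uD, ContinuousLinearMap.add_apply, DD_apply, smul_eq_mul]

def lD (i j : Fin n) (b : Idx n) : (Idx n → ℝ) →L[ℝ] ℝ :=
  (2 * ee i j 0 b) • DD i j 0 + (2 * ee i j 1 b) • DD i j 1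

lemma hasFDerivAt_ll (i j : Fin n) (b : Idx n) (w : Idx n → ℝ) :
    HasFDerivAt (ll i j b) (lD i j b) w := by
  have h0 := ((hasFDerivAt_dd i j 0 w).const_mul (2:ℝ)).mul_const (ee i j 0 b)
  have h1 := ((hasFDerivAt_dd i j 1 w).const_mul (2:ℝ)).mul_const (ee i j 1 b)
  have := h0.add h1
  refine this.congr_fderiv ?_
  ext v; simp [lD, ll]; ring

def GD (Γ : Fin n → ℝ) (b : Idx n) (w : Idx n → ℝ) : (Idx n → ℝ) →L[ℝ] ℝ :=
  -∑ i : Fin n, ∑ j ∈ Finset.Ioi i, (Γ i * Γ j / 2) •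
    ((uu i j w)⁻¹ • lD i j b + ll i j b w • ((-(uu i j w ^ 2)⁻¹) • uD i j w))

lemma hasFDerivAt_G (Γ : Fin n → ℝ) (b : Idx n) (w : Idx n → ℝ)
    (hw : ∀ i j : Fin n, i < j → uu i j w ≠ 0) :
    HasFDerivAt (G Γ b) (GD Γ b w) w := by
  apply HasFDerivAt.neg
  apply HasFDerivAt.fun_sum
  intro i _
  apply HasFDerivAt.fun_sum
  intro j hj
  have hinv : HasFDerivAt (fun w => (uu i j w)⁻¹) ((-(uu i j w ^ 2)⁻¹) • uD i j w) w := by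
    have := (hasDerivAt_inv (hw i j (Finset.mem_Ioi.mp hj))).comp_hasFDerivAt w
      (hasFDerivAt_uu i j w)
    exact this
  have := (hinv.mul (hasFDerivAt_ll i j b w)).const_mul (Γ i * Γ j / 2)
  exact this

lemma D2H_apply (Γ : Fin n → ℝ) (z₀ : Idx n → ℝ)
    (hz : ∀ i j : Fin n, i < j → uu i j z₀ ≠ 0) (a b : Idx n) :
    D2H n Γ z₀ a b = -∑ i : Fin n, ∑ j ∈ Finset.Ioi i, Γ i * Γ j / 2 *
      ((uu i j z₀)⁻¹ * (2 * ee i j 0 b * ee i j 0 a + 2 * ee i j 1 b * ee i j 1 a)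
        + ll i j b z₀ * ((-(uu i j z₀ ^ 2)⁻¹)
            * (2 * dd i j 0 z₀ * ee i j 0 a + 2 * dd i j 1 z₀ * ee i j 1 a))) := by
  have hev : ∀ᶠ w in nhds z₀, ∀ i j : Fin n, i < j → uu i j w ≠ 0 := by
    rw [Filter.eventually_all]
    intro i
    rw [Filter.eventually_all]
    intro j
    by_cases h : i < j
    · filter_upwards [(continuous_uu i j).continuousAt.eventually_ne (hz i j h)] with w hw
      exact fun _ => hw
    · exact Filter.Eventually.of_forall fun w hij => absurd hij h
  have hEq : (fun w => fderiv ℝ (vortexH n Γ) w (Pi.single b 1)) =ᶠ[nhds z₀] G Γ b := by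
    filter_upwards [hev] with w hw
    exact fderivH_apply Γ w hw b
  show fderiv ℝ (fun w => fderiv ℝ (vortexH n Γ) w (Pi.single b 1)) z₀ (Pi.single a 1) = _
  rw [hEq.fderiv_eq, (hasFDerivAt_G Γ b z₀ hz).fderiv]
  simp only [GD, ContinuousLinearMap.neg_apply, ContinuousLinearMap.sum_apply,
    ContinuousLinearMap.smul_apply, lD, uD, ContinuousLinearMap.add_apply, DD_apply, smul_eq_mul]


lemma ee_apply (i j k : Fin n) (t s : Fin 2) :
    ee i j t (k,s) = if t = s then ((if i = k then (1:ℝ) else 0) - (if j = k then 1 else 0))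
      else 0 := by
  unfold ee
  by_cases h : t = s
  · subst h; simp [Prod.ext_iff]
  · simp [Prod.ext_iff, h]

lemma uu_ne_zero (z : Idx n → ℝ) (hd : Distinct n z) (i j : Fin n) (hij : i ≠ j) :
    uu i j z ≠ 0 := by
  intro h
  apply hd i j hij
  have h' : dd i j 0 z ^ 2 + dd i j 1 z ^ 2 = 0 := h
  have h0 : dd i j 0 z = 0 := by nlinarith [sq_nonneg (dd i j 0 z), sq_nonneg (dd i j 1 z)]
  have h1 : dd i j 1 z = 0 := by nlinarith [sq_nonneg (dd i j 0 z), sq_nonneg (dd i j 1 z)]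
  unfold dd at h0 h1
  ext <;> simp <;> linarith

lemma D2H_CR1 (Γ : Fin n → ℝ) (z₀ : Idx n → ℝ)
    (hz : ∀ i j : Fin n, i < j → uu i j z₀ ≠ 0) (k l : Fin n) :
    D2H n Γ z₀ (k,1) (l,0) = D2H n Γ z₀ (k,0) (l,1) := by
  rw [D2H_apply Γ z₀ hz, D2H_apply Γ z₀ hz]
  congr 1
  refine Finset.sum_congr rfl fun i _ => Finset.sum_congr rfl fun j hj => ?_
  simp only [ll, ee_apply]
  norm_num
  exact Or.inl (by ring)

lemma D2H_CR2 (Γ : Fin n → ℝ) (z₀ : Idx n → ℝ)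
    (hz : ∀ i j : Fin n, i < j → uu i j z₀ ≠ 0) (k l : Fin n) :
    D2H n Γ z₀ (k,1) (l,1) = -(D2H n Γ z₀ (k,0) (l,0)) := by
  rw [D2H_apply Γ z₀ hz, D2H_apply Γ z₀ hz, neg_neg, ← Finset.sum_neg_distrib]
  refine Finset.sum_congr rfl fun i _ => ?_
  rw [← Finset.sum_neg_distrib]
  refine Finset.sum_congr rfl fun j hj => ?_
  have hu := hz i j (Finset.mem_Ioi.mp hj)
  have hu2 : uu i j z₀ = dd i j 0 z₀ ^ 2 + dd i j 1 z₀ ^ 2 := rfl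
  simp only [ll, ee_apply]
  norm_num
  rw [hu2] at hu ⊢
  field_simp
  ring

end VtxAux

section AntiComm

open VtxAux

variable {n : ℕ}

lemma Kmat_mul_apply (M : Matrix (Idx n) (Idx n) ℝ) (k : Fin n) (s : Fin 2) (b : Idx n) :
    (Kmat n * M) (k,s) b = if s = 0 then M (k,1) b else -(M (k,0) b) := by
  simp only [Matrix.mul_apply, Kmat, Matrix.of_apply]
  rw [Fintype.sum_prod_type]
  rw [Finset.sum_eq_single k]
  · fin_cases s <;> simp [Fin.sum_univ_two]
  · intro c _ hc
    simp [Ne.symm hc]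
  · simp

lemma mul_Kmat_apply (M : Matrix (Idx n) (Idx n) ℝ) (a : Idx n) (l : Fin n) (t : Fin 2) :
    (M * Kmat n) a (l,t) = if t = 0 then -(M a (l,1)) else M a (l,0) := by
  simp only [Matrix.mul_apply, Kmat, Matrix.of_apply]
  rw [Fintype.sum_prod_type]
  rw [Finset.sum_eq_single l]
  · fin_cases t <;> simp [Fin.sum_univ_two]
  · intro c _ hc
    simp [hc]
  · simp

lemma K_D2H_anticomm (Γ : Fin n → ℝ) (z₀ : Idx n → ℝ)
    (hz : ∀ i j : Fin n, i < j → uu i j z₀ ≠ 0) :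
    Kmat n * D2H n Γ z₀ = -(D2H n Γ z₀ * Kmat n) := by
  ext ⟨k,s⟩ ⟨l,t⟩
  rw [Kmat_mul_apply, Matrix.neg_apply, mul_Kmat_apply]
  fin_cases s <;> fin_cases t <;>
    simp [D2H_CR1 Γ z₀ hz k l, D2H_CR2 Γ z₀ hz k l]

lemma Kmat_mul_Kmat : Kmat n * Kmat n = -1 := by
  ext ⟨k,s⟩ ⟨l,t⟩
  rw [Kmat_mul_apply]
  fin_cases s <;> fin_cases t <;>
    simp [Kmat, Matrix.one_apply, Prod.ext_iff] <;>
    by_cases h : k = l <;> simp [h, Fin.ext_iff]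

lemma Mmat_inv (Γ : Fin n → ℝ) (hΓ : ∀ i, Γ i ≠ 0) :
    (Mmat n Γ)⁻¹ = Matrix.diagonal (fun a : Idx n => (Γ a.1)⁻¹) := by
  apply Matrix.inv_eq_right_inv
  rw [Mmat, Matrix.diagonal_mul_diagonal]
  have : (fun a : Idx n => Γ a.1 * (Γ a.1)⁻¹) = fun _ => (1:ℝ) :=
    funext fun a => mul_inv_cancel₀ (hΓ a.1)
  rw [this, Matrix.diagonal_one]

lemma Kmat_comm_Minv (Γ : Fin n → ℝ) (hΓ : ∀ i, Γ i ≠ 0) :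
    Kmat n * (Mmat n Γ)⁻¹ = (Mmat n Γ)⁻¹ * Kmat n := by
  rw [Mmat_inv Γ hΓ]
  ext ⟨k,s⟩ ⟨l,t⟩
  rw [Matrix.mul_diagonal, Matrix.diagonal_mul]
  simp only [Kmat, Matrix.of_apply]
  by_cases h : k = l
  · subst h; simp [mul_comm]
  · simp [h]

lemma K_A_anticomm (Γ : Fin n → ℝ) (hΓ : ∀ i, Γ i ≠ 0) (z₀ : Idx n → ℝ)
    (hz : ∀ i j : Fin n, i < j → uu i j z₀ ≠ 0) :
    Kmat n * ((Mmat n Γ)⁻¹ * D2H n Γ z₀) = -(((Mmat n Γ)⁻¹ * D2H n Γ z₀) * Kmat n) := by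
  rw [← mul_assoc, Kmat_comm_Minv Γ hΓ, mul_assoc, K_D2H_anticomm Γ z₀ hz]
  rw [mul_neg, mul_assoc]

end AntiComm



section FinalAux

lemma eig_split {m : Type*} [Fintype m] {A : Matrix m m ℝ} {v₁ v₂ : m → ℝ} {α β : ℝ}
    (heig : (A.map Complex.ofReal).mulVec (fun a => (v₁ a : ℂ) + (v₂ a : ℂ) * Complex.I)
      = ((α:ℂ) + (β:ℂ) * Complex.I) • (fun a => (v₁ a : ℂ) + (v₂ a : ℂ) * Complex.I)) :
    A.mulVec v₁ = α • v₁ - β • v₂ ∧ A.mulVec v₂ = β • v₁ + α • v₂ := by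
  have key : ∀ a, (A.mulVec v₁ a : ℂ) + (A.mulVec v₂ a : ℂ) * Complex.I
      = ((α:ℂ) + (β:ℂ)*Complex.I) * ((v₁ a : ℂ) + (v₂ a : ℂ)*Complex.I) := by
    intro a
    have h := congrFun heig a
    rw [Pi.smul_apply, smul_eq_mul] at h
    rw [← h]
    simp only [Matrix.mulVec, dotProduct, Matrix.map_apply]
    push_cast
    rw [Finset.sum_mul, ← Finset.sum_add_distrib]
    refine Finset.sum_congr rfl fun b _ => by ring
  constructor <;> funext a <;> have h := key a <;>
    rw [Complex.ext_iff] at h <;> obtain ⟨h1, h2⟩ := h <;>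
    simp only [Complex.add_re, Complex.add_im, Complex.mul_re, Complex.mul_im,
      Complex.ofReal_re, Complex.ofReal_im, Complex.I_re, Complex.I_im] at h1 h2 <;>
    simp only [Pi.sub_apply, Pi.add_apply, Pi.smul_apply, smul_eq_mul] <;> nlinarith [h1, h2]

theorem charpoly_restrict_dvd {V : Type*} [AddCommGroup V] [Module ℝ V] [FiniteDimensional ℝ V]
    (f : V →ₗ[ℝ] V) (p : Submodule ℝ V) (h : ∀ x ∈ p, f x ∈ p) :
    (f.restrict h).charpoly ∣ f.charpoly := by
  obtain ⟨q, hq⟩ := Submodule.exists_isCompl p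
  set bp := Module.finBasis ℝ p
  set bq := Module.finBasis ℝ q
  let e := Submodule.prodEquivOfIsCompl p q hq
  let b : Module.Basis (Fin (Module.finrank ℝ p) ⊕ Fin (Module.finrank ℝ q)) ℝ V := (bp.prod bq).map e
  set M := LinearMap.toMatrix b b f with hM
  have hrepr : ∀ (x : V) (hx : x ∈ p) (i), b.repr x (Sum.inr i) = 0 := by
    intro x hx i
    have : x = e (⟨x, hx⟩, 0) := by simp [e, Submodule.coe_prodEquivOfIsCompl']
    rw [this]
    simp [b, Module.Basis.map_repr]
  have h11 : M.toBlocks₁₁ = LinearMap.toMatrix bp bp (f.restrict h) := by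
    ext i j
    have hbj : b (Sum.inl j) = (bp j : V) := by
      simp [b, Module.Basis.prod_apply, e, Submodule.coe_prodEquivOfIsCompl']
    have : f (b (Sum.inl j)) = ((f.restrict h) (bp j) : V) := by
      rw [hbj]; rfl
    have hrep : ∀ (y : p) (i), b.repr (y : V) (Sum.inl i) = bp.repr y i := by
      intro y i
      have : (y : V) = e (y, 0) := by simp [e, Submodule.coe_prodEquivOfIsCompl']
      rw [this]
      simp [b, Module.Basis.map_repr]
    simp only [Matrix.toBlocks₁₁, LinearMap.toMatrix_apply, Matrix.of_apply, hM]
    rw [this, hrep]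
  have h21 : M.toBlocks₂₁ = 0 := by
    ext i j
    have hbj : b (Sum.inl j) = (bp j : V) := by
      simp [b, Module.Basis.prod_apply, e, Submodule.coe_prodEquivOfIsCompl']
    simp only [Matrix.toBlocks₂₁, LinearMap.toMatrix_apply, Matrix.of_apply, hM,
      Matrix.zero_apply]
    rw [hbj]
    exact hrepr _ (h _ (bp j).2) i
  have key : M.charpoly
      = (LinearMap.toMatrix bp bp (f.restrict h)).charpoly * M.toBlocks₂₂.charpoly := by
    rw [← h11, ← Matrix.charpoly_fromBlocks_zero₂₁ M.toBlocks₁₁ M.toBlocks₁₂ M.toBlocks₂₂, ← h21,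
      Matrix.fromBlocks_toBlocks]
  rw [← LinearMap.charpoly_toMatrix f b, ← LinearMap.charpoly_toMatrix (f.restrict h) bp, ← hM,
    key]
  exact Dvd.intro _ rfl

lemma charpoly_R4 (α β ω : ℝ) :
    (!![(0:ℝ),0,α-ω,β; 0,0,-β,α-ω; α+ω,β,0,0; -β,α+ω,0,0]).charpoly
      = (X^2 + C (ω^2))^2 - C (2*(α^2-β^2)) * (X^2 + C (ω^2)) + C ((α^2+β^2)^2) := by
  have hc : Matrix.charmatrix (!![(0:ℝ),0,α-ω,β; 0,0,-β,α-ω; α+ω,β,0,0; -β,α+ω,0,0])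
      = !![X, 0, -C (α-ω), -C β; 0, X, C β, -C (α-ω);
           -C (α+ω), -C β, X, 0; C β, -C (α+ω), 0, X] := by
    ext i j : 2
    fin_cases i <;> fin_cases j <;>
      first
        | (rw [Matrix.charmatrix_apply_eq]; norm_num)
        | (rw [Matrix.charmatrix_apply_ne _ _ _ (by decide)]; norm_num)
  rw [Matrix.charpoly, hc]
  simp [Matrix.det_succ_row_zero, Fin.sum_univ_succ,
    show Fin.succAbove (2 : Fin 4) (2 : Fin 3) = 3 from rfl,
    show Fin.succAbove (3 : Fin 4) (2 : Fin 3) = 2 from rfl]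
  push_cast [map_sub, map_add, map_mul, map_pow, map_ofNat]
  ring

end FinalAux

/-- a complex eigenvector `v = v₁ + i v₂` of `M⁻¹D²H(z₀)` with eigenvalue
`μ = α + iβ` gives a real invariant subspace `{v₁, v₂, Kv₁, Kv₂}` of the stability matrix `B`,
and (if that subspace is 4-dimensional) the real quartic
`(λ² + ω² - μ²)(λ² + ω² - μ̄²)` divides the characteristic polynomial of `B`. -/
theorem complex_eigenvector_invariant_subspace (n : ℕ) (hn : 2 ≤ n) (Γ : Fin n → ℝ)
    (hΓ : ∀ i, Γ i ≠ 0) (z₀ : Idx n → ℝ) (ω : ℝ) (hre : IsRelEq n Γ z₀ ω)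
    (v₁ v₂ : Idx n → ℝ) (hv : ¬(v₁ = 0 ∧ v₂ = 0)) (α β : ℝ)
    (heig : (((Mmat n Γ)⁻¹ * D2H n Γ z₀).map Complex.ofReal).mulVec
        (fun a => (v₁ a : ℂ) + (v₂ a : ℂ) * Complex.I)
      = ((α : ℂ) + (β : ℂ) * Complex.I) •
        (fun a => (v₁ a : ℂ) + (v₂ a : ℂ) * Complex.I)) :
    (Bmat n Γ z₀ ω).mulVec v₁
      = (α + ω) • (Kmat n).mulVec v₁ - β • (Kmat n).mulVec v₂ ∧
    (Bmat n Γ z₀ ω).mulVec v₂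
      = β • (Kmat n).mulVec v₁ + (α + ω) • (Kmat n).mulVec v₂ ∧
    (Bmat n Γ z₀ ω).mulVec ((Kmat n).mulVec v₁) = (α - ω) • v₁ - β • v₂ ∧
    (Bmat n Γ z₀ ω).mulVec ((Kmat n).mulVec v₂) = β • v₁ + (α - ω) • v₂ ∧
    (∀ w ∈ Submodule.span ℝ {v₁, v₂, (Kmat n).mulVec v₁, (Kmat n).mulVec v₂},
      (Bmat n Γ z₀ ω).mulVec w
        ∈ Submodule.span ℝ {v₁, v₂, (Kmat n).mulVec v₁, (Kmat n).mulVec v₂}) ∧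
    (Module.finrank ℝ
        (Submodule.span ℝ {v₁, v₂, (Kmat n).mulVec v₁, (Kmat n).mulVec v₂}) = 4 →
      ((X ^ 2 + C (ω ^ 2)) ^ 2 - C (2 * (α ^ 2 - β ^ 2)) * (X ^ 2 + C (ω ^ 2))
          + C ((α ^ 2 + β ^ 2) ^ 2)) ∣ (Bmat n Γ z₀ ω).charpoly)  := by
  obtain ⟨hdist, hω, -⟩ := hre
  have hz : ∀ i j : Fin n, i < j → VtxAux.uu i j z₀ ≠ 0 :=
    fun i j h => VtxAux.uu_ne_zero z₀ hdist i j (ne_of_lt h)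
  obtain ⟨hA1, hA2⟩ := eig_split heig
  have hanti := K_A_anticomm Γ hΓ z₀ hz
  have hKK : Kmat n * Kmat n = -1 := Kmat_mul_Kmat
  have hBdef : Bmat n Γ z₀ ω = Kmat n * ((Mmat n Γ)⁻¹ * D2H n Γ z₀ + ω • 1) := rfl
  have hBv1 : (Bmat n Γ z₀ ω).mulVec v₁
      = (α + ω) • (Kmat n).mulVec v₁ - β • (Kmat n).mulVec v₂ := by
    rw [hBdef, ← Matrix.mulVec_mulVec, Matrix.add_mulVec, Matrix.smul_mulVec,
      Matrix.one_mulVec, hA1,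
      show α • v₁ - β • v₂ + ω • v₁ = (α + ω) • v₁ - β • v₂ by module,
      Matrix.mulVec_sub, Matrix.mulVec_smul, Matrix.mulVec_smul]
  have hBv2 : (Bmat n Γ z₀ ω).mulVec v₂
      = β • (Kmat n).mulVec v₁ + (α + ω) • (Kmat n).mulVec v₂ := by
    rw [hBdef, ← Matrix.mulVec_mulVec, Matrix.add_mulVec, Matrix.smul_mulVec,
      Matrix.one_mulVec, hA2,
      show β • v₁ + α • v₂ + ω • v₂ = β • v₁ + (α + ω) • v₂ by module,
      Matrix.mulVec_add, Matrix.mulVec_smul, Matrix.mulVec_smul]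
  have hBK : Bmat n Γ z₀ ω * Kmat n = (Mmat n Γ)⁻¹ * D2H n Γ z₀ - ω • 1 := by
    rw [hBdef, mul_add, Matrix.mul_smul, mul_one, add_mul, Matrix.smul_mul, hanti, neg_mul,
      mul_assoc, hKK, Matrix.mul_neg, mul_one, neg_neg, smul_neg]
    exact (sub_eq_add_neg _ _).symm
  have hBK1 : (Bmat n Γ z₀ ω).mulVec ((Kmat n).mulVec v₁) = (α - ω) • v₁ - β • v₂ := by
    rw [Matrix.mulVec_mulVec, hBK, Matrix.sub_mulVec, Matrix.smul_mulVec,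
      Matrix.one_mulVec, hA1]
    module
  have hBK2 : (Bmat n Γ z₀ ω).mulVec ((Kmat n).mulVec v₂) = β • v₁ + (α - ω) • v₂ := by
    rw [Matrix.mulVec_mulVec, hBK, Matrix.sub_mulVec, Matrix.smul_mulVec,
      Matrix.one_mulVec, hA2]
    module
  set S : Set (Idx n → ℝ) := {v₁, v₂, (Kmat n).mulVec v₁, (Kmat n).mulVec v₂} with hS
  have m1 : v₁ ∈ Submodule.span ℝ S := Submodule.subset_span (by simp [hS])
  have m2 : v₂ ∈ Submodule.span ℝ S := Submodule.subset_span (by simp [hS])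
  have m3 : (Kmat n).mulVec v₁ ∈ Submodule.span ℝ S := Submodule.subset_span (by simp [hS])
  have m4 : (Kmat n).mulVec v₂ ∈ Submodule.span ℝ S := Submodule.subset_span (by simp [hS])
  have hinv : ∀ w ∈ Submodule.span ℝ S, (Bmat n Γ z₀ ω).mulVec w ∈ Submodule.span ℝ S := by
    intro w hw
    have hle : Submodule.span ℝ S
        ≤ Submodule.comap (Bmat n Γ z₀ ω).mulVecLin (Submodule.span ℝ S) := by
      rw [Submodule.span_le]
      intro x hx
      simp only [Submodule.mem_comap, Matrix.mulVecLin_apply, SetLike.mem_coe]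
      simp only [hS, Set.mem_insert_iff, Set.mem_singleton_iff] at hx
      rcases hx with rfl | rfl | rfl | rfl
      · rw [hBv1]
        exact sub_mem (Submodule.smul_mem _ _ m3) (Submodule.smul_mem _ _ m4)
      · rw [hBv2]
        exact add_mem (Submodule.smul_mem _ _ m3) (Submodule.smul_mem _ _ m4)
      · rw [hBK1]
        exact sub_mem (Submodule.smul_mem _ _ m1) (Submodule.smul_mem _ _ m2)
      · rw [hBK2]
        exact add_mem (Submodule.smul_mem _ _ m1) (Submodule.smul_mem _ _ m2)
    simpa using hle hw
  refine ⟨hBv1, hBv2, hBK1, hBK2, hinv, ?_⟩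
  intro hdim
  set W : Fin 4 → (Idx n → ℝ) := ![v₁, v₂, (Kmat n).mulVec v₁, (Kmat n).mulVec v₂] with hW
  have hrange : Set.range W = S := by
    rw [hS]
    ext x
    constructor
    · rintro ⟨i, rfl⟩
      fin_cases i <;> simp [hW]
    · intro hx
      simp only [Set.mem_insert_iff, Set.mem_singleton_iff] at hx
      rcases hx with rfl | rfl | rfl | rfl
      exacts [⟨0, rfl⟩, ⟨1, rfl⟩, ⟨2, rfl⟩, ⟨3, rfl⟩]
  have li : LinearIndependent ℝ W := by
    rw [linearIndependent_iff_card_eq_finrank_span]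
    have : Set.finrank ℝ (Set.range W) = 4 := by
      rw [Set.finrank, hrange]
      exact hdim
    rw [this, Fintype.card_fin]
  have hqp : Submodule.span ℝ (Set.range W) = Submodule.span ℝ S := by rw [hrange]
  have hinv' : ∀ x ∈ Submodule.span ℝ (Set.range W),
      (Bmat n Γ z₀ ω).mulVecLin x ∈ Submodule.span ℝ (Set.range W) := by
    intro x hx
    rw [hqp] at hx ⊢
    simpa using hinv x hx
  set R : Matrix (Fin 4) (Fin 4) ℝ :=
    !![(0:ℝ),0,α-ω,β; 0,0,-β,α-ω; α+ω,β,0,0; -β,α+ω,0,0] with hR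
  have hfW : ∀ j : Fin 4, (Bmat n Γ z₀ ω).mulVecLin (W j) = ∑ i : Fin 4, R i j • W i := by
    intro j
    fin_cases j <;>
      simp [hW, hR, Matrix.mulVecLin_apply, Fin.sum_univ_four, hBv1, hBv2, hBK1, hBK2,
        Matrix.vecHead, Matrix.vecTail, Function.comp] <;>
      try module
  have htoM : LinearMap.toMatrix (Module.Basis.span li) (Module.Basis.span li)
      ((Bmat n Γ z₀ ω).mulVecLin.restrict hinv') = R := by
    ext i j
    rw [LinearMap.toMatrix_apply]
    have hsum : (Bmat n Γ z₀ ω).mulVecLin.restrict hinv' (Module.Basis.span li j)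
        = ∑ k : Fin 4, R k j • Module.Basis.span li k := by
      apply Subtype.coe_injective
      push_cast [LinearMap.restrict_apply, Module.Basis.span_apply]
      exact hfW j
    rw [hsum, map_sum]
    simp only [map_smul, Module.Basis.repr_self]
    simp [Finsupp.single_apply]
  have hchar : ((Bmat n Γ z₀ ω).mulVecLin.restrict hinv').charpoly = R.charpoly := by
    rw [← htoM, LinearMap.charpoly_toMatrix]
  have hq : R.charpoly = (X ^ 2 + C (ω ^ 2)) ^ 2 - C (2 * (α ^ 2 - β ^ 2)) * (X ^ 2 + C (ω ^ 2))
      + C ((α ^ 2 + β ^ 2) ^ 2) := by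
    rw [hR]
    exact charpoly_R4 α β ω
  have hdvd := charpoly_restrict_dvd ((Bmat n Γ z₀ ω).mulVecLin) _ hinv'
  rw [hchar, hq] at hdvd
  have hfB : ((Bmat n Γ z₀ ω).mulVecLin).charpoly = (Bmat n Γ z₀ ω).charpoly := by
    rw [← LinearMap.charpoly_toMatrix ((Bmat n Γ z₀ ω).mulVecLin) (Pi.basisFun ℝ (Idx n)),
      LinearMap.toMatrix_eq_toMatrix']
    congr 1
    ext i j
    simp [LinearMap.toMatrix'_apply, Matrix.mulVecLin_apply, Matrix.mulVec, dotProduct, Pi.single_apply]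
  rw [← hfB]
  exact hdvd
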